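/- Along any solution of the quantized Hazeltine system (as above), the cross-helicity tr(χ·Θᵏ) is constant in time for every natural number k. -/

import Mathlib

open Matrix

section Aux

variable {N : ℕ}

/-- Entrywise derivative notion for matrix curves. -/
def HasDerivAtM (A : ℝ → Matrix (Fin N) (Fin N) ℂ) (A' : Matrix (Fin N) (Fin N) ℂ) (t : ℝ) : Prop :=
  ∀ i j, HasDerivAt (fun s => A s i j) (A' i j) t

lemma HasDerivAtM.mul {A B : ℝ → Matrix (Fin N) (Fin N) ℂ} {A' B' : Matrix (Fin N) (Fin N) ℂ}
    {t : ℝ} (hA : HasDerivAtM A A' t) (hB : HasDerivAtM B B' t) :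
    HasDerivAtM (fun s => A s * B s) (A' * B t + A t * B') t := by
  intro i j
  have : HasDerivAt (fun s => ∑ l, A s i l * B s l j)
      (∑ l, (A' i l * B t l j + A t i l * B' l j)) t :=
    HasDerivAt.fun_sum fun l _ => (hA i l).mul (hB l j)
  simpa [Matrix.mul_apply, Matrix.add_apply, Finset.sum_add_distrib] using this

lemma HasDerivAtM.trace {A : ℝ → Matrix (Fin N) (Fin N) ℂ} {A' : Matrix (Fin N) (Fin N) ℂ}
    {t : ℝ} (hA : HasDerivAtM A A' t) :
    HasDerivAt (fun s => (A s).trace) A'.trace t := by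
  have : HasDerivAt (fun s => ∑ i, A s i i) (∑ i, A' i i) t :=
    HasDerivAt.fun_sum fun i _ => hA i i
  simpa [Matrix.trace, Matrix.diag] using this

lemma HasDerivAtM.pow {A : ℝ → Matrix (Fin N) (Fin N) ℂ} {M : Matrix (Fin N) (Fin N) ℂ}
    {t : ℝ} (hA : HasDerivAtM A (A t * M - M * A t) t) (k : ℕ) :
    HasDerivAtM (fun s => A s ^ k) (A t ^ k * M - M * A t ^ k) t := by
  induction k with
  | zero =>
    intro i j
    simpa using hasDerivAt_const t ((1 : Matrix (Fin N) (Fin N) ℂ) i j)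
  | succ k ih =>
    have h := hA.mul ih
    have : (A t * M - M * A t) * A t ^ k + A t * (A t ^ k * M - M * A t ^ k)
        = A t ^ (k + 1) * M - M * A t ^ (k + 1) := by
      rw [pow_succ']
      noncomm_ring
    intro i j
    have h' := h i j
    rw [this] at h'
    convert h' using 2 with s
    simp [pow_succ']

end Aux

/-- along any solution of the quantized Hazeltine system, the
cross-helicity `tr(χΘᵏ)` is constant in time for every natural number `k`. -/
theorem stmt18 (N : ℕ) (W Θ χ M₁ M₂ : ℝ → Matrix (Fin N) (Fin N) ℂ) (α : ℝ)
    (hW : ∀ t i j, HasDerivAt (fun s => W s i j)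
      (((W t * M₁ t - M₁ t * W t) + (Θ t * M₂ t - M₂ t * Θ t)) i j) t)
    (hΘ : ∀ t i j, HasDerivAt (fun s => Θ s i j)
      (((Θ t * M₁ t - M₁ t * Θ t) - α • (Θ t * χ t - χ t * Θ t)) i j) t)
    (hχ : ∀ t i j, HasDerivAt (fun s => χ s i j)
      (((χ t * M₁ t - M₁ t * χ t) + (Θ t * M₂ t - M₂ t * Θ t)) i j) t) :
    ∀ (k : ℕ) (s t : ℝ), (χ s * Θ s ^ k).trace = (χ t * Θ t ^ k).trace := by
  intro k
  -- derivative of the trace is zero at every time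
  have key : ∀ t : ℝ, HasDerivAt (fun s => (χ s * Θ s ^ k).trace) 0 t := by
    intro t
    set M : Matrix (Fin N) (Fin N) ℂ := M₁ t - α • χ t with hM
    have hΘ' : HasDerivAtM Θ (Θ t * M - M * Θ t) t := by
      intro i j
      have := hΘ t i j
      have e : Θ t * M - M * Θ t
          = Θ t * M₁ t - M₁ t * Θ t - α • (Θ t * χ t - χ t * Θ t) := by
        rw [hM]
        simp only [Matrix.mul_sub, Matrix.sub_mul, Matrix.mul_smul, Matrix.smul_mul, smul_sub]
        module
      rw [e]; exact this
    have hχ' : HasDerivAtM χ (χ t * M - M * χ t + (Θ t * M₂ t - M₂ t * Θ t)) t := by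
      intro i j
      have := hχ t i j
      have e : χ t * M - M * χ t + (Θ t * M₂ t - M₂ t * Θ t)
          = χ t * M₁ t - M₁ t * χ t + (Θ t * M₂ t - M₂ t * Θ t) := by
        rw [hM]
        simp only [Matrix.mul_sub, Matrix.sub_mul, Matrix.mul_smul, Matrix.smul_mul, smul_sub]
        module
      rw [e]; exact this
    have hpow := hΘ'.pow (M := M) k
    have hmul := hχ'.mul hpow
    have htr := hmul.trace
    have hz : ((χ t * M - M * χ t + (Θ t * M₂ t - M₂ t * Θ t)) * Θ t ^ k
        + χ t * (Θ t ^ k * M - M * Θ t ^ k)).trace = 0 := by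
      simp only [Matrix.add_mul, Matrix.sub_mul, Matrix.mul_sub,
        Matrix.trace_add, Matrix.trace_sub, mul_assoc]
      rw [Matrix.trace_mul_comm (M) (χ t * Θ t ^ k),
        Matrix.trace_mul_comm (Θ t) (M₂ t * Θ t ^ k)]
      simp only [mul_assoc, ← pow_succ, ← pow_succ']
      ring
    rw [hz] at htr
    exact htr
  have hdiff : Differentiable ℝ (fun s => (χ s * Θ s ^ k).trace) :=
    fun t => (key t).differentiableAt
  intro s t
  exact is_const_of_deriv_eq_zero hdiff (fun x => (key x).deriv) s t
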